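/- arXiv:2004.14063 — 3 statements merged into one kernel-verified Lean document; each statement's English description precedes it below -/
import Mathlib

section
/- Suppose L is additionally a Noether lattice with a unique maximal element m (quasi-local). If p ∈ L is a proper element such that p² = m², m² ≤ p and p ≤ m, then p is φ₂-δ₁-primary; that is, for all x, y ∈ L, x·y ≤ p and x·y ≰ p² imply x ≤ p or y ≤ √p. -/
open CompleteLattice

/-- The compact elements of a complete lattice, as Mathlib defined them in December 2024. -/
def CompleteLattice.IsCompactElement {α : Type*} [CompleteLattice α] (k : α) :=
  ∀ s : Set α, k ≤ sSup s → ∃ t : Finset α, ↑t ⊆ s ∧ k ≤ t.sup id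

variable {L : Type*} [CompleteLattice L] [CommMonoid L]

/-- `L` is a compactly generated multiplicative lattice: multiplication distributes over
arbitrary joins, the top element is the multiplicative identity, `1` is a compact element,
every element is a join of compact elements, and products of compact elements are compact. -/
def IsCGMultLattice (L : Type*) [CompleteLattice L] [CommMonoid L] : Prop :=
  (∀ (a : L) (S : Set L), a * sSup S = ⨆ b ∈ S, a * b) ∧
  ((1 : L) = ⊤) ∧
  CompleteLattice.IsCompactElement (1 : L) ∧
  (∀ a : L, a = sSup {x : L | CompleteLattice.IsCompactElement x ∧ x ≤ a}) ∧
  (∀ x y : L, CompleteLattice.IsCompactElement x → CompleteLattice.IsCompactElement y →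
    CompleteLattice.IsCompactElement (x * y))

/-- An expansion function on `L`: `a ≤ δ a` and `δ` is monotone. -/
def IsExpansion (δ : L → L) : Prop :=
  (∀ a : L, a ≤ δ a) ∧ ∀ a b : L, a ≤ b → δ a ≤ δ b

/-- A proper element `p` is `φ`-`δ`-primary if `a*b ≤ p` and `a*b ≰ φ p` imply
`a ≤ p` or `b ≤ δ p`. -/
def IsPhiDeltaPrimary (φ δ : L → L) (p : L) : Prop :=
  p < 1 ∧ ∀ a b : L, a * b ≤ p → ¬ a * b ≤ φ p → a ≤ p ∨ b ≤ δ p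

/-- A proper element `p` is `δ`-primary if `a*b ≤ p` implies `a ≤ p` or `b ≤ δ p`. -/
def IsDeltaPrimary (δ : L → L) (p : L) : Prop :=
  p < 1 ∧ ∀ a b : L, a * b ≤ p → a ≤ p ∨ b ≤ δ p

/-- A proper element `p` is `φ`-prime if `a*b ≤ p` and `a*b ≰ φ p` imply
`a ≤ p` or `b ≤ p`. -/
def IsPhiPrime (φ : L → L) (p : L) : Prop :=
  p < 1 ∧ ∀ a b : L, a * b ≤ p → ¬ a * b ≤ φ p → a ≤ p ∨ b ≤ p

/-- The residual `(a : b)`, the join of all `x` with `x * b ≤ a`. -/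
def lres (a b : L) : L := sSup {x : L | x * b ≤ a}

/-- The radical `√a`, the join of all compact `x` with `x ^ n ≤ a` for some `n ≥ 1`. -/
def lradical (a : L) : L :=
  sSup {x : L | CompleteLattice.IsCompactElement x ∧ ∃ n : ℕ, 0 < n ∧ x ^ n ≤ a}

/-- A principal element of a multiplicative lattice. -/
def IsPrincipalElem (e : L) : Prop :=
  ∀ a b : L, a ⊓ b * e = (lres a e ⊓ b) * e ∧ lres (a * e ⊔ b) e = lres b e ⊔ a

/-- A Noether lattice: modular, principally generated, satisfying the ascending
chain condition. -/
def IsNoetherLattice (L : Type*) [CompleteLattice L] [CommMonoid L] : Prop :=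
  IsModularLattice L ∧ (∀ a : L, a = sSup {e : L | IsPrincipalElem e ∧ e ≤ a}) ∧
  WellFoundedGT L

/-- A maximal element: proper, and `m < x ≤ 1` implies `x = 1`. -/
def IsMaximalElem (m : L) : Prop :=
  m < 1 ∧ ∀ x : L, m < x → x ≤ 1 → x = 1

theorem quasiLocal_sq_eq_max_sq_phi2_delta1_primary (hL : IsCGMultLattice L)
    (hN : IsNoetherLattice L) (m : L) (hm : IsMaximalElem m)
    (hmu : ∀ m' : L, IsMaximalElem m' → m' = m)
    (p : L) (hp : p < 1) (h1 : p ^ 2 = m ^ 2) (h2 : m ^ 2 ≤ p) (h3 : p ≤ m) :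
    ∀ x y : L, x * y ≤ p → ¬ x * y ≤ p ^ 2 → x ≤ p ∨ y ≤ lradical p := by
  obtain ⟨hdist, hone, -, hgen, -⟩ := hL
  have hone' : ∀ a : L, a ≤ 1 := by intro a; rw [hone]; exact le_top
  have hsup : ∀ a b c : L, a * (b ⊔ c) = a * b ⊔ a * c := by
    intro a b c
    rw [← sSup_pair, hdist]
    exact iSup_pair
  have hmono : ∀ a b c : L, b ≤ c → a * b ≤ a * c := by
    intro a b c h
    have : a * c = a * b ⊔ a * c := by rw [← hsup, sup_eq_right.mpr h]
    rw [this]; exact le_sup_left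
  have hle : ∀ a b : L, a * b ≤ b := by
    intro a b
    calc a * b = b * a := mul_comm a b
      _ ≤ b * 1 := hmono b a 1 (hone' a)
      _ = b := mul_one b
  have hrad : m ≤ lradical p := by
    conv_lhs => rw [hgen m]
    apply _root_.sSup_le
    rintro x ⟨hc, hxm⟩
    apply _root_.le_sSup
    refine ⟨hc, 2, two_pos, ?_⟩
    calc x ^ 2 = x * x := sq x
      _ ≤ x * m := hmono x x m hxm
      _ = m * x := mul_comm x m
      _ ≤ m * m := hmono m x m hxm
      _ = m ^ 2 := (sq m).symm
      _ ≤ p := h2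
  intro x y hxy _
  by_cases hym : y ≤ m
  · exact Or.inr (hym.trans hrad)
  · left
    have hmy : m ⊔ y = 1 := by
      refine hm.2 _ (lt_of_le_of_ne le_sup_left ?_) (hone' _)
      intro h
      exact hym (h ▸ le_sup_right)
    have hx : x = x * m ⊔ x * y := by
      conv_lhs => rw [← mul_one x, ← hmy, hsup]
    have hxm : x * m ≤ p := by
      have hxm2 : x * m = x * m * m ⊔ x * y * m := by
        conv_lhs => rw [hx]
        rw [mul_comm _ m, hsup, mul_comm m (x * m), mul_comm m (x * y)]
      rw [hxm2]
      apply sup_le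
      · calc x * m * m = x * (m * m) := mul_assoc x m m
          _ ≤ m * m := hle x (m * m)
          _ = m ^ 2 := (sq m).symm
          _ ≤ p := h2
      · calc x * y * m = m * (x * y) := mul_comm (x * y) m
          _ ≤ x * y := hle m (x * y)
          _ ≤ p := hxy
    calc x = x * m ⊔ x * y := hx
      _ ≤ p := sup_le hxm hxy
end

section
/- Let δ be an expansion function on L and p ∈ L a proper element. Then p is φ_ω-δ-primary if and only if p is φ_n-δ-primary for every integer n ≥ 2. -/
open CompleteLattice

variable {L : Type*} [CompleteLattice L] [CommMonoid L]

theorem phiOmega_iff_phiN (hL : IsCGMultLattice L)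
    (δ : L → L) (hδ : IsExpansion δ) (p : L) (hp : p < 1) :
    IsPhiDeltaPrimary (fun a : L => ⨅ (k : ℕ) (_ : 1 ≤ k), a ^ k) δ p ↔
      ∀ n : ℕ, 2 ≤ n → IsPhiDeltaPrimary (fun a : L => a ^ n) δ p := by
  constructor
  · rintro ⟨-, hw⟩ n hn
    refine ⟨hp, fun a b hab hnot => ?_⟩
    refine hw a b hab fun hle => hnot ?_
    exact hle.trans (iInf₂_le n (by omega))
  · intro h
    refine ⟨hp, fun a b hab hnot => ?_⟩
    simp only [le_iInf_iff, not_forall] at hnot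
    obtain ⟨n, hn1, hnle⟩ := hnot
    have hn2 : 2 ≤ n := by
      rcases Nat.lt_or_ge n 2 with h2 | h2
      · interval_cases n
        · exact absurd (by simpa using hab) hnle
      · exact h2
    exact (h n hn2).2 a b hab hnle
end

section
/- Let δ be an expansion function on L and let q ∈ L be a proper element which is 2-potent δ-primary, i.e. for all a, b ∈ L, a·b ≤ q² implies a ≤ q or b ≤ δ(q). Let φ : L → L be a function with φ(a) ≤ a and φ(a) ≤ a² for all a ∈ L. Then q is φ-δ-primary if and only if q is δ-primary. -/
open CompleteLattice

variable {L : Type*} [CompleteLattice L] [CommMonoid L]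

theorem twoPotent_phi_iff_delta (hL : IsCGMultLattice L)
    (δ : L → L) (hδ : IsExpansion δ) (q : L) (hq : q < 1)
    (h2pot : ∀ a b : L, a * b ≤ q ^ 2 → a ≤ q ∨ b ≤ δ q)
    (φ : L → L) (hφ : ∀ a : L, φ a ≤ a) (hφ2 : ∀ a : L, φ a ≤ a ^ 2) :
    IsPhiDeltaPrimary φ δ q ↔ IsDeltaPrimary δ q := by
  constructor
  · rintro ⟨_, h⟩
    refine ⟨hq, fun a b hab => ?_⟩
    by_cases hc : a * b ≤ φ q
    · exact h2pot a b (hc.trans (hφ2 q))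
    · exact h a b hab hc
  · rintro ⟨_, h⟩
    exact ⟨hq, fun a b hab _ => h a b hab⟩
end
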